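/- Let q = 2 and π = x² + x + 1 ∈ F_2[x], and let α ∈ K_∞ satisfy α² + α + 1 = 0. Then α ∈ O_∞ and α is (−1)-approximable: there exists a sequence f_n/g_n with f_n, g_n ∈ A, g_n ≠ 0, f_nA + g_nA = A, |α − f_n/g_n| < 2/|g_n|² for all n, and f_n/g_n → α. (First assertion of Example 8.4 of the paper, which identifies explicit badly approximable quadratic irrationals.) -/

import Mathlib

open Filter Polynomial MeasureTheory IsDedekindDomain
open scoped Multiplicative WithZero

/-- The real absolute value attached to a `ℤᵐ⁰`-valued valuation with base `q`:
`Multiplicative.ofAdd n ↦ q ^ n` and `0 ↦ 0`. -/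
noncomputable def zabs (q : ℕ) (x : ℤᵐ⁰) : ℝ :=
  if hx : x = 0 then 0 else (q : ℝ) ^ Multiplicative.toAdd (WithZero.unzero hx)

variable (Fq : Type) [Field Fq] [Fintype Fq]

/-- The height-one prime `(π)` of `F_q[x]` attached to an irreducible polynomial `π`. -/
noncomputable def piPrime (π : Polynomial Fq) (hirr : Irreducible π) :
    HeightOneSpectrum (Polynomial Fq) where
  asIdeal := Ideal.span {π}
  isPrime := (Ideal.span_singleton_prime hirr.ne_zero).mpr hirr.prime
  ne_bot := by
    simp only [ne_eq, Ideal.span_singleton_eq_bot]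
    exact hirr.ne_zero

/-- The completion `K_∞` of `K = F_q(x)` with respect to the `π`-adic valuation `ν`
(normalized by `ν π = 1`). -/
noncomputable abbrev Kinf (π : Polynomial Fq) (hirr : Irreducible π) : Type :=
  (piPrime Fq π hirr).adicCompletion (RatFunc Fq)

/-- The absolute value `|h| = q ^ (-ν h)` on `K_∞`. -/
noncomputable def absKinf (q : ℕ) (π : Polynomial Fq) (hirr : Irreducible π)
    (h : Kinf Fq π hirr) : ℝ :=
  zabs q (Valued.v h)

/-- The inclusion `K = F_q(x) → K_∞`. -/
noncomputable def toKinf (π : Polynomial Fq) (hirr : Irreducible π) (r : RatFunc Fq) :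
    Kinf Fq π hirr := r

/-- The ring `A` of rational functions regular away from the closed point defined by `π`:
the `F_q`-subalgebra of `F_q(x)` generated by `1/π`, `x/π` and `x²/π`. -/
noncomputable def ringA (π : Polynomial Fq) : Subalgebra Fq (RatFunc Fq) :=
  Algebra.adjoin Fq
    {(algebraMap (Polynomial Fq) (RatFunc Fq) π)⁻¹,
      algebraMap (Polynomial Fq) (RatFunc Fq) X / algebraMap (Polynomial Fq) (RatFunc Fq) π,
      algebraMap (Polynomial Fq) (RatFunc Fq) (X ^ 2) / algebraMap (Polynomial Fq) (RatFunc Fq) π}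

/-- `f/g` is an `M`-approximation of `α ∈ K_∞`: `f, g ∈ A`, `g ≠ 0`, `fA + gA = A` and
`|α - f/g| < q^(-M)/|g|²`. -/
def IsApproxA (q : ℕ) (π : Polynomial Fq) (hirr : Irreducible π) (M : ℤ)
    (α : Kinf Fq π hirr) (f g : ringA Fq π) : Prop :=
  g ≠ 0 ∧ Ideal.span {f, g} = (⊤ : Ideal (ringA Fq π)) ∧
    absKinf Fq q π hirr
        (α - toKinf Fq π hirr (f : RatFunc Fq) / toKinf Fq π hirr (g : RatFunc Fq)) <
      (q : ℝ) ^ (-M) / absKinf Fq q π hirr (toKinf Fq π hirr (g : RatFunc Fq)) ^ 2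

/-- `π = x² + x + 1` over `F₂`. -/
noncomputable def piPoly : Polynomial (ZMod 2) := X ^ 2 + X + 1

lemma piPoly_monic : (piPoly).Monic := by
  unfold piPoly; monicity!

lemma piPoly_natDegree : (piPoly).natDegree = 2 := by
  unfold piPoly; compute_degree!

lemma piPoly_irreducible : Irreducible piPoly := by
  by_contra h
  rcases (piPoly_monic.not_irreducible_iff_exists_add_mul_eq_coeff piPoly_natDegree).mp h with
    ⟨c₁, c₂, h0, h1⟩
  have e0 : (piPoly).coeff 0 = 1 := by
    simp [piPoly, coeff_one, coeff_X]
  have e1 : (piPoly).coeff 1 = 1 := by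
    simp [piPoly, coeff_one, coeff_X]
  rw [e0] at h0
  rw [e1] at h1
  revert h0 h1
  revert c₁ c₂
  decide


/-! ### Auxiliary development for Example 8.4 -/

set_option maxHeartbeats 1000000
set_option synthInstance.maxHeartbeats 400000

namespace Ex84

noncomputable abbrev KK := RatFunc (ZMod 2)

noncomputable abbrev vP : HeightOneSpectrum (Polynomial (ZMod 2)) :=
  piPrime (ZMod 2) piPoly piPoly_irreducible

noncomputable abbrev KI := Kinf (ZMod 2) piPoly piPoly_irreducible

noncomputable def ι : KK →+* KI := algebraMap KK KI

noncomputable def ap : Polynomial (ZMod 2) →+* KK := algebraMap _ _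

noncomputable abbrev P : KK := ap piPoly

lemma piPoly_ne_zero : piPoly ≠ 0 := piPoly_irreducible.ne_zero

lemma P_ne_zero : P ≠ 0 := RatFunc.algebraMap_ne_zero piPoly_ne_zero

lemma tk_eq (r : KK) : toKinf (ZMod 2) piPoly piPoly_irreducible r = ι r := rfl

lemma v_coe (r : KK) : Valued.v (ι r) = vP.valuation KK r :=
  HeightOneSpectrum.valuedAdicCompletion_eq_valuation' vP r

lemma v_pi : vP.valuation KK P = ((Multiplicative.ofAdd (-1 : ℤ) : Multiplicative ℤ) : ℤᵐ⁰) := by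
  rw [show vP.valuation KK P = vP.intValuation piPoly from
    HeightOneSpectrum.valuation_of_algebraMap vP piPoly]
  exact HeightOneSpectrum.intValuation_singleton vP piPoly_ne_zero rfl

lemma not_dvd_linear (c : ZMod 2) : ¬ piPoly ∣ (X + C c) := by
  intro hdvd
  have h1 : (X + C c : Polynomial (ZMod 2)) ≠ 0 := Polynomial.X_add_C_ne_zero c
  have h2 := Polynomial.natDegree_le_of_dvd hdvd h1
  rw [piPoly_natDegree, Polynomial.natDegree_X_add_C] at h2
  omega

lemma v_linear (c : ZMod 2) : vP.valuation KK (ap (X + C c)) = 1 := by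
  refine le_antisymm (HeightOneSpectrum.valuation_le_one vP _) ?_
  by_contra hlt
  push_neg at hlt
  have hd := (HeightOneSpectrum.valuation_lt_one_iff_dvd vP (X + C c)).mp hlt
  rw [show vP.asIdeal = Ideal.span {piPoly} from rfl,
    span_singleton_dvd_span_singleton_iff_dvd] at hd
  exact not_dvd_linear c hd

lemma h2 : (1 : KI) + 1 = 0 := by
  have e : ((1 : KK) + 1) = 0 := by
    rw [show (1 : KK) = algebraMap (ZMod 2) KK 1 from (map_one _).symm, ← map_add,
      show (1 : ZMod 2) + 1 = 0 from rfl, map_zero]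
  rw [show (1 : KI) = ι 1 from (map_one ι).symm, ← map_add, e, map_zero]

/-! ### zabs lemmas -/

lemma zabs_coe (u : Multiplicative ℤ) :
    zabs 2 (u : ℤᵐ⁰) = (2 : ℝ) ^ (Multiplicative.toAdd u) := by
  rw [zabs, dif_neg WithZero.coe_ne_zero]
  norm_num [WithZero.unzero_coe]

lemma zabs_le_of_le {x : ℤᵐ⁰} {k : ℤ}
    (h : x ≤ ((Multiplicative.ofAdd k : Multiplicative ℤ) : ℤᵐ⁰)) :
    zabs 2 x ≤ (2 : ℝ) ^ k := by
  rcases eq_or_ne x 0 with hx | hx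
  · rw [hx, zabs, dif_pos rfl]
    positivity
  · obtain ⟨u, rfl⟩ := WithZero.ne_zero_iff_exists.mp hx
    rw [zabs_coe]
    have hu : Multiplicative.toAdd u ≤ k := by
      rw [WithZero.coe_le_coe] at h
      rw [← Multiplicative.toAdd_le] at h
      simpa using h
    exact zpow_le_zpow_right₀ one_le_two hu

/-! ### the sequence of polynomial approximants -/

noncomputable def Pn (c : ZMod 2) : ℕ → Polynomial (ZMod 2)
  | 0 => X + C c
  | (k+1) => Pn c k ^ 2 + 1

lemma Pn_monic_deg (c : ZMod 2) (k : ℕ) :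
    (Pn c k).Monic ∧ (Pn c k).natDegree = 2 ^ k := by
  induction k with
  | zero => exact ⟨Polynomial.monic_X_add_C c, Polynomial.natDegree_X_add_C c⟩
  | succ k ih =>
    obtain ⟨hm, hd⟩ := ih
    have hm2 : (Pn c k ^ 2).Monic := hm.pow 2
    have hd2 : (Pn c k ^ 2).natDegree = 2 ^ (k + 1) := by
      rw [Polynomial.natDegree_pow, hd]; ring
    have hlt : (1 : Polynomial (ZMod 2)).degree < (Pn c k ^ 2).degree := by
      rw [Polynomial.degree_one, ← Polynomial.natDegree_pos_iff_degree_pos, hd2]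
      positivity
    refine ⟨hm2.add_of_left hlt, ?_⟩
    show (Pn c k ^ 2 + 1).natDegree = 2 ^ (k + 1)
    rw [Polynomial.natDegree_add_eq_left_of_degree_lt hlt, hd2]

/-! ### membership in the ring A -/

lemma gen1_mem : P⁻¹ ∈ ringA (ZMod 2) piPoly :=
  Algebra.subset_adjoin (Set.mem_insert _ _)

lemma gen2_mem : ap X / P ∈ ringA (ZMod 2) piPoly :=
  Algebra.subset_adjoin (by right; left; rfl)

lemma gen3_mem : ap (X ^ 2) / P ∈ ringA (ZMod 2) piPoly :=
  Algebra.subset_adjoin (by right; right; rfl)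

lemma mon_mem : ∀ (m k : ℕ), k ≤ 2 * m → ap (X ^ k) / P ^ m ∈ ringA (ZMod 2) piPoly := by
  intro m
  induction m with
  | zero =>
    intro k hk
    interval_cases k
    simp only [pow_zero, map_one, div_one]
    exact one_mem _
  | succ m ih =>
    intro k hk
    match k with
    | 0 =>
      have e : ap (X ^ 0) / P ^ (m + 1) = (P⁻¹) ^ (m + 1) := by
        rw [pow_zero, map_one, one_div, inv_pow]
      rw [e]
      exact pow_mem gen1_mem _
    | 1 =>
      have e : ap (X ^ 1) / P ^ (m + 1) = (ap X / P) * (P⁻¹) ^ m := by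
        rw [pow_one, inv_pow, ← div_eq_mul_inv, div_div, ← pow_succ']
      rw [e]
      exact mul_mem gen2_mem (pow_mem gen1_mem m)
    | (k+2) =>
      have e : ap (X ^ (k + 2)) / P ^ (m + 1) = (ap (X ^ 2) / P) * (ap (X ^ k) / P ^ m) := by
        rw [div_mul_div_comm, ← map_mul, ← pow_add]
        rw [show 2 + k = k + 2 from by omega, ← pow_succ']
      rw [e]
      exact mul_mem gen3_mem (ih k (by omega))

lemma poly_mem (p : Polynomial (ZMod 2)) (m : ℕ) (hdeg : p.natDegree ≤ 2 * m) :
    ap p / P ^ m ∈ ringA (ZMod 2) piPoly := by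
  classical
  have hsupp : ∀ k ∈ p.support, k ≤ 2 * m := fun k hk =>
    le_trans (Polynomial.le_natDegree_of_mem_supp k hk) hdeg
  have hrw : ap p = ∑ k ∈ p.support, ap ((Polynomial.monomial k) (p.coeff k)) := by
    conv_lhs => rw [p.as_sum_support]
    rw [map_sum]
  rw [hrw, Finset.sum_div]
  refine sum_mem fun k hk => ?_
  have e : ap ((Polynomial.monomial k) (p.coeff k)) / P ^ m
      = algebraMap (ZMod 2) KK (p.coeff k) * (ap (X ^ k) / P ^ m) := by
    rw [← Polynomial.C_mul_X_pow_eq_monomial, map_mul, mul_div_assoc]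
    congr 1
  rw [e, ← Algebra.smul_def]
  exact Subalgebra.smul_mem _ (mon_mem m k (hsupp k hk)) _

/-! ### valuation bounds -/

lemma v_alpha_le (α : KI) (hα : α ^ 2 + α + 1 = 0) : Valued.v α ≤ 1 := by
  have hsq : α ^ 2 = α + 1 := by linear_combination hα - (α + 1) * h2
  have hmax : (Valued.v α) ^ 2 ≤ max (Valued.v α) 1 :=
    calc (Valued.v α) ^ 2 = Valued.v (α + 1) := by rw [← hsq, map_pow]
      _ ≤ max (Valued.v α) (Valued.v 1) := Valuation.map_add _ _ _
      _ = max (Valued.v α) 1 := by rw [map_one]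
  rcases le_total (Valued.v α) 1 with h | h
  · exact h
  · have h4 : (Valued.v α) ^ 2 ≤ Valued.v α := by rwa [max_eq_left h] at hmax
    rcases eq_or_ne (Valued.v α) 0 with h0 | h0
    · rw [h0]; exact zero_le_one
    · obtain ⟨u, hu⟩ := WithZero.ne_zero_iff_exists.mp h0
      rw [← hu] at h4 ⊢
      rw [← WithZero.coe_pow, WithZero.coe_le_coe, ← Multiplicative.toAdd_le,
        toAdd_pow, nsmul_eq_mul] at h4
      rw [show (1 : ℤᵐ⁰) = ((1 : Multiplicative ℤ) : ℤᵐ⁰) from rfl, WithZero.coe_le_coe,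
        ← Multiplicative.toAdd_le, toAdd_one]
      omega

lemma v_base (α : KI) (hα : α ^ 2 + α + 1 = 0) :
    ∃ c : ZMod 2, Valued.v (α - ι (ap (Pn c 0))) ≤
      ((Multiplicative.ofAdd (-1 : ℤ) : Multiplicative ℤ) : ℤᵐ⁰) := by
  have hv1 : ∀ c : ZMod 2, Valued.v (α - ι (ap (X + C c))) ≤ 1 := by
    intro c
    refine le_trans (Valuation.map_sub Valued.v _ _) ?_
    rw [v_coe, v_linear]
    exact max_le (v_alpha_le α hα) le_rfl
  set a : KI := ι (ap X) with ha
  have e0 : ι (ap (X + C (0 : ZMod 2))) = a := by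
    rw [Polynomial.C_0, add_zero]
  have e1 : ι (ap (X + C (1 : ZMod 2))) = a + 1 := by
    rw [Polynomial.C_1, map_add, map_add, map_one, map_one]
  have eP : ι P = a ^ 2 + a + 1 := by
    show ι (ap (X ^ 2 + X + 1)) = _
    simp only [map_add, map_pow, map_one]
    rfl
  have hident : (α - ι (ap (X + C (0 : ZMod 2)))) * (α - ι (ap (X + C (1 : ZMod 2)))) = ι P := by
    rw [e0, e1, eP]
    linear_combination hα - (α + 1 + α * a) * h2
  have hprod : Valued.v (α - ι (ap (X + C (0 : ZMod 2)))) *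
      Valued.v (α - ι (ap (X + C (1 : ZMod 2)))) =
      ((Multiplicative.ofAdd (-1 : ℤ) : Multiplicative ℤ) : ℤᵐ⁰) := by
    rw [← map_mul, hident, v_coe, v_pi]
  set b0 := Valued.v (α - ι (ap (X + C (0 : ZMod 2)))) with hb0
  set b1 := Valued.v (α - ι (ap (X + C (1 : ZMod 2)))) with hb1
  have hne : b0 ≠ 0 ∧ b1 ≠ 0 := by
    constructor <;> intro h <;> rw [h] at hprod <;> simp at hprod
  obtain ⟨u0, hu0⟩ := WithZero.ne_zero_iff_exists.mp hne.1
  obtain ⟨u1, hu1⟩ := WithZero.ne_zero_iff_exists.mp hne.2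
  have hle0 : Multiplicative.toAdd u0 ≤ 0 := by
    have := hv1 0
    rw [← hb0, ← hu0, show (1 : ℤᵐ⁰) = ((1 : Multiplicative ℤ) : ℤᵐ⁰) from rfl,
      WithZero.coe_le_coe, ← Multiplicative.toAdd_le] at this
    simpa using this
  have hle1 : Multiplicative.toAdd u1 ≤ 0 := by
    have := hv1 1
    rw [← hb1, ← hu1, show (1 : ℤᵐ⁰) = ((1 : Multiplicative ℤ) : ℤᵐ⁰) from rfl,
      WithZero.coe_le_coe, ← Multiplicative.toAdd_le] at this
    simpa using this
  have hsum : Multiplicative.toAdd u0 + Multiplicative.toAdd u1 = -1 := by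
    rw [← hu0, ← hu1, ← WithZero.coe_mul, WithZero.coe_inj] at hprod
    have := congrArg Multiplicative.toAdd hprod
    simpa using this
  rcases (by omega : Multiplicative.toAdd u0 ≤ -1 ∨ Multiplicative.toAdd u1 ≤ -1) with h | h
  · refine ⟨0, ?_⟩
    show b0 ≤ _
    rw [← hu0, WithZero.coe_le_coe, ← Multiplicative.toAdd_le]
    simpa using h
  · refine ⟨1, ?_⟩
    show b1 ≤ _
    rw [← hu1, WithZero.coe_le_coe, ← Multiplicative.toAdd_le]
    simpa using h

lemma v_rec (α : KI) (hα : α ^ 2 + α + 1 = 0) (c : ZMod 2)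
    (hbase : Valued.v (α - ι (ap (Pn c 0))) ≤
      ((Multiplicative.ofAdd (-1 : ℤ) : Multiplicative ℤ) : ℤᵐ⁰)) :
    ∀ k : ℕ, Valued.v (α - ι (ap (Pn c k))) ≤
      ((Multiplicative.ofAdd (-(2 ^ k) : ℤ) : Multiplicative ℤ) : ℤᵐ⁰) := by
  intro k
  induction k with
  | zero =>
    have he : (-(2 ^ 0) : ℤ) = -1 := by norm_num
    rw [he]
    exact hbase
  | succ k ih =>
    have e : ι (ap (Pn c (k+1))) = (ι (ap (Pn c k))) ^ 2 + 1 := by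
      show ι (ap (Pn c k ^ 2 + 1)) = _
      simp only [map_add, map_pow, map_one]
    have hstep : α - ι (ap (Pn c (k+1))) = (α - ι (ap (Pn c k))) ^ 2 := by
      rw [e]
      set b := ι (ap (Pn c k))
      linear_combination -hα + (α + α * b - b ^ 2) * h2
    rw [hstep, map_pow]
    calc (Valued.v (α - ι (ap (Pn c k)))) ^ 2
        ≤ ((Multiplicative.ofAdd (-(2 ^ k) : ℤ) : Multiplicative ℤ) : ℤᵐ⁰) ^ 2 :=
          pow_le_pow_left' ih 2
      _ = ((Multiplicative.ofAdd (-(2 ^ (k+1)) : ℤ) : Multiplicative ℤ) : ℤᵐ⁰) := by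
          rw [← WithZero.coe_pow, WithZero.coe_inj, ← ofAdd_nsmul]
          congr 1
          push_cast
          ring

end Ex84

open Ex84 in
/-- Example 8.4, first assertion: for `q = 2`, `π = x² + x + 1`, any
`α ∈ K_∞` with `α² + α + 1 = 0` lies in `O_∞` and is `(-1)`-approximable, i.e. it is the
limit of a sequence of fractions `f_n/g_n` with `f_n, g_n ∈ A`, `g_n ≠ 0`,
`f_nA + g_nA = A` and `|α - f_n/g_n| < 2/|g_n|²`. -/
theorem quadratic_root_neg_one_approximable
    (α : Kinf (ZMod 2) piPoly piPoly_irreducible) (hα : α ^ 2 + α + 1 = 0) :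
    absKinf (ZMod 2) 2 piPoly piPoly_irreducible α ≤ 1 ∧
      ∃ f g : ℕ → ringA (ZMod 2) piPoly,
        (∀ n, IsApproxA (ZMod 2) 2 piPoly piPoly_irreducible (-1) α (f n) (g n)) ∧
        Tendsto
          (fun n => toKinf (ZMod 2) piPoly piPoly_irreducible ((f n : RatFunc (ZMod 2))) /
            toKinf (ZMod 2) piPoly piPoly_irreducible ((g n : RatFunc (ZMod 2))))
          atTop (nhds α) := by
  obtain ⟨c, hbase⟩ := Ex84.v_base α hα
  have hrec := Ex84.v_rec α hα c hbase
  constructor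
  · -- |α| ≤ 1
    have hv := Ex84.v_alpha_le α hα
    have h1 : Valued.v α ≤ ((Multiplicative.ofAdd (0 : ℤ) : Multiplicative ℤ) : ℤᵐ⁰) := hv
    have := Ex84.zabs_le_of_le h1
    simpa [absKinf] using this
  · -- the approximating sequence
    have hfmem : ∀ n : ℕ, Ex84.ap (Ex84.Pn c (n+1)) / Ex84.P ^ (2 ^ n) ∈ ringA (ZMod 2) piPoly := by
      intro n
      refine Ex84.poly_mem _ _ ?_
      rw [(Ex84.Pn_monic_deg c (n+1)).2, pow_succ]
      exact le_of_eq (mul_comm _ _)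
    have hgmem : ∀ n : ℕ, (Ex84.P ^ (2 ^ n))⁻¹ ∈ ringA (ZMod 2) piPoly := by
      intro n
      have := Ex84.poly_mem 1 (2 ^ n) (by simp)
      simpa [one_div] using this
    refine ⟨fun n => ⟨_, hfmem n⟩, fun n => ⟨_, hgmem n⟩, ?_, ?_⟩
    · intro n
      have hPm : Ex84.P ^ (2 ^ n) ≠ 0 := pow_ne_zero _ Ex84.P_ne_zero
      have hdivval : (Ex84.ap (Ex84.Pn c (n+1)) / Ex84.P ^ (2 ^ n)) / (Ex84.P ^ (2 ^ n))⁻¹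
          = Ex84.ap (Ex84.Pn c (n+1)) := by
        rw [div_eq_mul_inv (Ex84.ap (Ex84.Pn c (n+1)) / Ex84.P ^ (2 ^ n)) ((Ex84.P ^ (2 ^ n))⁻¹),
          inv_inv, div_mul_cancel₀ _ hPm]
      refine ⟨?_, ?_, ?_⟩
      · -- g ≠ 0
        intro h
        exact inv_ne_zero hPm (congrArg Subtype.val h)
      · -- coprimality
        set m : ℕ := 2 ^ n with hm
        set p : Polynomial (ZMod 2) := Ex84.Pn c (n+1) with hp
        have hmon : p.Monic := (Ex84.Pn_monic_deg c (n+1)).1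
        have hdeg : p.natDegree = 2 * m := by
          rw [hp, (Ex84.Pn_monic_deg c (n+1)).2, hm, pow_succ, mul_comm]
        set s : Polynomial (ZMod 2) := piPoly ^ (2 * m) /ₘ p with hs
        set t : Polynomial (ZMod 2) := piPoly ^ (2 * m) %ₘ p with ht
        have hst : t + p * s = piPoly ^ (2 * m) := Polynomial.modByMonic_add_div _ p
        have hs_deg : s.natDegree ≤ 2 * m := by
          rw [hs, Polynomial.natDegree_divByMonic _ hmon, Polynomial.natDegree_pow,
            piPoly_natDegree, hdeg]
          omega
        have ht_deg : t.natDegree ≤ 2 * m := by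
          refine le_trans (Polynomial.natDegree_modByMonic_le _ hmon) ?_
          rw [hdeg]
        rw [Ideal.eq_top_iff_one, Ideal.mem_span_pair]
        refine ⟨⟨Ex84.ap s / Ex84.P ^ m, Ex84.poly_mem s m hs_deg⟩,
          ⟨Ex84.ap t / Ex84.P ^ m, Ex84.poly_mem t m ht_deg⟩, ?_⟩
        apply Subtype.ext
        show (Ex84.ap s / Ex84.P ^ m) * (Ex84.ap p / Ex84.P ^ m)
            + (Ex84.ap t / Ex84.P ^ m) * (Ex84.P ^ m)⁻¹ = 1
        have key : Ex84.ap t + Ex84.ap p * Ex84.ap s = Ex84.P ^ (2 * m) := by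
          rw [← map_mul, ← map_add, hst, map_pow]
        have hPm' : Ex84.P ^ m ≠ 0 := pow_ne_zero _ Ex84.P_ne_zero
        field_simp
        linear_combination key
      · -- the inequality
        show zabs 2 _ < _
        rw [Ex84.tk_eq, Ex84.tk_eq, ← map_div₀]
        show zabs 2 (Valued.v (α - Ex84.ι ((Ex84.ap (Ex84.Pn c (n+1)) / Ex84.P ^ (2 ^ n)) /
          (Ex84.P ^ (2 ^ n))⁻¹))) < _
        rw [hdivval]
        have hvg : Valued.v (Ex84.ι ((Ex84.P ^ (2 ^ n))⁻¹))
            = ((Multiplicative.ofAdd ((2 ^ n : ℕ) : ℤ) : Multiplicative ℤ) : ℤᵐ⁰) := by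
          rw [Ex84.v_coe, map_inv₀, map_pow, Ex84.v_pi, ← WithZero.coe_pow, ← WithZero.coe_inv,
            WithZero.coe_inj, ← ofAdd_nsmul, ← ofAdd_neg]
          congr 1
          push_cast
          ring
        have hzg : zabs 2 (Valued.v (Ex84.ι ((Ex84.P ^ (2 ^ n))⁻¹)))
            = (2 : ℝ) ^ ((2 ^ n : ℕ) : ℤ) := by
          rw [hvg, Ex84.zabs_coe, toAdd_ofAdd]
        have hLHS : zabs 2 (Valued.v (α - Ex84.ι (Ex84.ap (Ex84.Pn c (n+1)))))
            ≤ (2 : ℝ) ^ (-(2 ^ (n+1)) : ℤ) := Ex84.zabs_le_of_le (hrec (n+1))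
        show zabs 2 (Valued.v (α - Ex84.ι (Ex84.ap (Ex84.Pn c (n+1)))))
          < ((2 : ℕ) : ℝ) ^ (-(-1) : ℤ) / zabs 2 (Valued.v (Ex84.ι ((Ex84.P ^ (2 ^ n))⁻¹))) ^ 2
        rw [hzg]
        refine lt_of_le_of_lt hLHS ?_
        have hsq : ((2 : ℝ) ^ ((2 ^ n : ℕ) : ℤ)) ^ (2 : ℕ)
            = (2 : ℝ) ^ (2 * ((2 ^ n : ℕ) : ℤ)) := by
          rw [← zpow_natCast ((2 : ℝ) ^ ((2 ^ n : ℕ) : ℤ)) 2, ← zpow_mul]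
          ring_nf
        rw [show ((2 : ℕ) : ℝ) = (2 : ℝ) by norm_num, hsq,
          show ((2 : ℝ) ^ (-(-1) : ℤ)) = (2 : ℝ) ^ (1 : ℤ) by norm_num,
          ← zpow_sub₀ (by norm_num : (2 : ℝ) ≠ 0)]
        refine zpow_lt_zpow_right₀ one_lt_two ?_
        have hc : ((2 ^ n : ℕ) : ℤ) = 2 ^ n := by push_cast; ring
        rw [hc, show ((2 : ℤ) ^ (n+1)) = 2 * 2 ^ n from by rw [pow_succ]; ring]
        have : (0 : ℤ) ≤ 2 ^ n := by positivity
        linarith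
    · -- Tendsto
      rw [Filter.tendsto_def]
      intro sset hs
      rw [Valued.mem_nhds] at hs
      obtain ⟨γ₀, hγ₀⟩ := hs
      set γ : ℤᵐ⁰ˣ := Units.map (MonoidWithZeroHom.ValueGroup₀.embedding
        (f := MonoidWithZeroHom.ofClass (Valued.v : Valuation KI ℤᵐ⁰))) γ₀ with hγdef
      have hγ : {y : KI | Valued.v (y - α) < (γ : ℤᵐ⁰)} ⊆ sset := fun y hy => hγ₀ (by
        show (Valued.v : Valuation KI ℤᵐ⁰).restrict (y - α) < γ₀.1
        rw [Valuation.restrict_lt_iff_lt_embedding]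
        exact hy)
      obtain ⟨u, hu⟩ := WithZero.ne_zero_iff_exists.mp γ.ne_zero
      have hev : ∀ᶠ n in atTop,
          (toKinf (ZMod 2) piPoly piPoly_irreducible
              ((Ex84.ap (Ex84.Pn c (n+1)) / Ex84.P ^ (2 ^ n))) /
            toKinf (ZMod 2) piPoly piPoly_irreducible (((Ex84.P ^ (2 ^ n))⁻¹))) ∈ sset := by
        filter_upwards [eventually_ge_atTop (Multiplicative.toAdd u).natAbs] with n hn
        apply hγ
        have hPm : Ex84.P ^ (2 ^ n) ≠ 0 := pow_ne_zero _ Ex84.P_ne_zero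
        have hdivval : (Ex84.ap (Ex84.Pn c (n+1)) / Ex84.P ^ (2 ^ n)) / (Ex84.P ^ (2 ^ n))⁻¹
            = Ex84.ap (Ex84.Pn c (n+1)) := by
          rw [div_eq_mul_inv (Ex84.ap (Ex84.Pn c (n+1)) / Ex84.P ^ (2 ^ n)) ((Ex84.P ^ (2 ^ n))⁻¹),
          inv_inv, div_mul_cancel₀ _ hPm]
        show Valued.v (_ - α) < (γ : ℤᵐ⁰)
        rw [Ex84.tk_eq, Ex84.tk_eq, ← map_div₀, hdivval, Valuation.map_sub_swap]
        refine lt_of_le_of_lt (hrec (n+1)) ?_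
        rw [← hu, WithZero.coe_lt_coe, ← ofAdd_toAdd u, Multiplicative.ofAdd_lt]
        have h1 : (n : ℤ) < 2 ^ (n+1) := by
          have h2 : n < 2 ^ (n+1) := lt_of_lt_of_le (Nat.lt_two_pow_self (n := n)) (Nat.pow_le_pow_right
            (by norm_num) (by omega))
          exact_mod_cast h2
        omega
      exact hev
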